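/- Let h > 0 and h₊ > 0, and set h_* = (h + h₊)/2, α = 2 − h₊²/(h h_*) and β = 2 − h²/(h₊ h_*). Then α ≥ 0 and β ≥ 0 hold simultaneously if and only if 2/(√5 + 1) ≤ h₊/h ≤ (√5 + 1)/2. -/
import Mathlib


/-- with h_* = (h + h₊)/2, the coefficients α = 2 − h₊²/(h h_*) and
β = 2 − h²/(h₊ h_*) of the non-uniform compact averaging operator are both nonnegative
iff 2/(√5 + 1) ≤ h₊/h ≤ (√5 + 1)/2. -/
theorem stmt_18 (h hp : ℝ) (hh : 0 < h) (hhp : 0 < hp) :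
    (0 ≤ 2 - hp^2 / (h * ((h + hp) / 2)) ∧ 0 ≤ 2 - h^2 / (hp * ((h + hp) / 2))) ↔
    (2 / (Real.sqrt 5 + 1) ≤ hp / h ∧ hp / h ≤ (Real.sqrt 5 + 1) / 2) := by
  have hs : Real.sqrt 5 ^ 2 = 5 := Real.sq_sqrt (by norm_num)
  have hs2 : (2:ℝ) < Real.sqrt 5 := by
    nlinarith [Real.sqrt_nonneg 5]
  have hsum : 0 < h + hp := by linarith
  have hA : (0 ≤ 2 - hp^2 / (h * ((h + hp) / 2))) ↔ hp^2 ≤ h^2 + h * hp := by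
    rw [sub_nonneg, div_le_iff₀ (by positivity)]
    constructor <;> intro <;> nlinarith
  have hB : (0 ≤ 2 - h^2 / (hp * ((h + hp) / 2))) ↔ h^2 ≤ hp^2 + h * hp := by
    rw [sub_nonneg, div_le_iff₀ (by positivity)]
    constructor <;> intro <;> nlinarith
  have hC : (2 / (Real.sqrt 5 + 1) ≤ hp / h) ↔ 2 * h ≤ (Real.sqrt 5 + 1) * hp := by
    rw [div_le_div_iff₀ (by linarith) hh]
    constructor <;> intro <;> nlinarith
  have hD : (hp / h ≤ (Real.sqrt 5 + 1) / 2) ↔ 2 * hp ≤ (Real.sqrt 5 + 1) * h := by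
    rw [div_le_div_iff₀ hh (by norm_num)]
    constructor <;> intro <;> nlinarith
  rw [hA, hB, hC, hD]
  constructor
  · rintro ⟨a, b⟩
    constructor
    · by_contra hcon
      push_neg at hcon
      have h1 : 0 < 2*h - hp - Real.sqrt 5 * hp := by nlinarith
      have h2 : 0 < 2*h - hp + Real.sqrt 5 * hp := by nlinarith
      nlinarith [mul_pos h1 h2]
    · by_contra hcon
      push_neg at hcon
      have h1 : 0 < 2*hp - h - Real.sqrt 5 * h := by nlinarith
      have h2 : 0 < 2*hp - h + Real.sqrt 5 * h := by nlinarith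
      nlinarith [mul_pos h1 h2]
  · rintro ⟨c, d⟩
    constructor
    · nlinarith [sq_nonneg (2*hp - h - Real.sqrt 5 * h), mul_pos hh hhp]
    · nlinarith [sq_nonneg (2*h - hp - Real.sqrt 5 * hp), mul_pos hh hhp]
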